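/- Let V be a finite set, S a group of permutations of V acting on cells i ∈ {0,1}^V by σ(i) = (i_{σ(v)})_{v∈V}, and n : {0,1}^V → ℕ observed counts with total sample size n = Σ_i n(i) > 0. Define p̂_S(i) = (1/|S(i)|) Σ_{j ∈ S(i)} n(j)/n, where S(i) = {σ(i) : σ ∈ S} is the orbit of cell i. Then p̂_S belongs to the symmetry model B(S) and maximizes the likelihood over B(S): for every binary distribution p with p_i = p_{σ(i)} for all σ ∈ S and all i, one has ∏_i p̂_S(i)^{n(i)} ≥ ∏_i p_i^{n(i)} (with 0^0 = 1). -/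

import Mathlib

open Finset

section MLEAux

open Finset

/-- Multinomial MLE inequality (Gibbs): if `x ≥ 0` sums to at most 1 on `s`, and the
counts `M` sum to `N > 0`, then `∏ x^M ≤ ∏ (M/N)^M`. -/
theorem gibbsAux {ι : Type*} [DecidableEq ι] (s : Finset ι) (x : ι → ℝ) (M : ι → ℕ) (N : ℕ)
    (hx : ∀ k ∈ s, 0 ≤ x k) (hsum : ∑ k ∈ s, x k ≤ 1)
    (hN : 0 < N) (hM : ∑ k ∈ s, M k = N) :
    ∏ k ∈ s, x k ^ M k ≤ ∏ k ∈ s, ((M k : ℝ) / N) ^ M k := by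
  classical
  set t := s.filter (fun k => M k ≠ 0) with ht
  have hts : t ⊆ s := filter_subset _ _
  have key : ∀ f : ι → ℝ, ∏ k ∈ s, f k ^ M k = ∏ k ∈ t, f k ^ M k := by
    intro f
    rw [ht, prod_filter_of_ne]
    intro k _ h hMk
    exact h (by rw [hMk, pow_zero])
  have hNR : (0:ℝ) < N := by exact_mod_cast hN
  have hMt : ∑ k ∈ t, (M k : ℝ) = N := by
    have h1 : ∑ k ∈ t, M k = N := by
      rw [ht, sum_filter_of_ne, hM]
      intro k _ h hMk; exact h hMk
    exact_mod_cast h1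
  set w : ι → ℝ := fun k => (M k : ℝ) / N with hw
  set z : ι → ℝ := fun k => x k * N / M k with hz
  have hwnn : ∀ k ∈ t, 0 ≤ w k := fun k _ => by positivity
  have hznn : ∀ k ∈ t, 0 ≤ z k := by
    intro k hk
    have := hx k (hts hk)
    positivity
  have hw1 : ∑ k ∈ t, w k = 1 := by
    rw [hw]; simp only; rw [← sum_div, hMt, div_self (ne_of_gt hNR)]
  have hwz : ∀ k ∈ t, w k * z k = x k := by
    intro k hk
    have hMk : (M k : ℝ) ≠ 0 := by
      have := (mem_filter.mp hk).2
      exact_mod_cast this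
    simp only [hw, hz]
    field_simp
  have hgm := Real.geom_mean_le_arith_mean_weighted t w z hwnn hw1 hznn
  have hle1 : ∏ k ∈ t, z k ^ w k ≤ 1 := by
    refine hgm.trans ?_
    calc ∑ k ∈ t, w k * z k = ∑ k ∈ t, x k := sum_congr rfl hwz
      _ ≤ ∑ k ∈ s, x k := sum_le_sum_of_subset_of_nonneg hts (fun k hk _ => hx k hk)
      _ ≤ 1 := hsum
  have hge0 : (0:ℝ) ≤ ∏ k ∈ t, z k ^ w k :=
    prod_nonneg fun k hk => Real.rpow_nonneg (hznn k hk) _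
  have hzM : ∏ k ∈ t, z k ^ M k ≤ 1 := by
    have heq : ∀ k ∈ t, z k ^ M k = (z k ^ w k) ^ N := by
      intro k hk
      have hMk : (M k : ℝ) ≠ 0 := by
        have := (mem_filter.mp hk).2; exact_mod_cast this
      rw [← Real.rpow_natCast (z k ^ w k) N, ← Real.rpow_mul (hznn k hk)]
      have : w k * N = M k := by simp only [hw]; field_simp
      rw [this, Real.rpow_natCast]
    calc ∏ k ∈ t, z k ^ M k = ∏ k ∈ t, (z k ^ w k) ^ N := prod_congr rfl heq
      _ = (∏ k ∈ t, z k ^ w k) ^ N := prod_pow t N _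
      _ ≤ 1 := pow_le_one₀ hge0 hle1
  have hwMnn : (0:ℝ) ≤ ∏ k ∈ t, w k ^ M k :=
    prod_nonneg fun k hk => pow_nonneg (hwnn k hk) _
  calc ∏ k ∈ s, x k ^ M k = ∏ k ∈ t, x k ^ M k := key x
    _ = ∏ k ∈ t, (w k * z k) ^ M k := prod_congr rfl fun k hk => by rw [hwz k hk]
    _ = (∏ k ∈ t, w k ^ M k) * ∏ k ∈ t, z k ^ M k := by
        rw [← prod_mul_distrib]; exact prod_congr rfl fun k _ => mul_pow _ _ _
    _ ≤ ∏ k ∈ t, w k ^ M k := mul_le_of_le_one_right hwMnn hzM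
    _ = ∏ k ∈ s, ((M k : ℝ) / N) ^ M k := (key _).symm

end MLEAux

namespace BMMI

variable {V : Type*} [Fintype V] [DecidableEq V]

/-- `Pr p A a` is the probability of the event `X_A = a|_A` under `p`. -/
def Pr (p : (V → Bool) → ℝ) (A : Finset V) (a : V → Bool) : ℝ :=
  ∑ i ∈ Finset.univ.filter (fun i : V → Bool => ∀ v ∈ A, i v = a v), p i

/-- `p` is a binary distribution on `V`. -/
def IsDist (p : (V → Bool) → ℝ) : Prop :=
  (∀ i, 0 ≤ p i) ∧ ∑ i : V → Bool, p i = 1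

/-- `Pr2 p S T a b` is the probability of the joint event `X_S = a|_S, X_T = b|_T`. -/
def Pr2 (p : (V → Bool) → ℝ) (S T : Finset V) (a b : V → Bool) : ℝ :=
  ∑ i ∈ Finset.univ.filter
      (fun i : V → Bool => (∀ v ∈ S, i v = a v) ∧ (∀ v ∈ T, i v = b v)), p i

/-- `X_S` and `X_T` are independent under `p`. -/
def Indep (p : (V → Bool) → ℝ) (S T : Finset V) : Prop :=
  ∀ a b : V → Bool, Pr2 p S T a b = Pr p S a * Pr p T b

/-- `spo G A` consists of `A` together with all vertices adjacent to a vertex of `A`. -/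
def spo (G : SimpleGraph V) [DecidableRel G.Adj] (A : Finset V) : Finset V :=
  Finset.univ.filter (fun w => w ∈ A ∨ ∃ v ∈ A, G.Adj v w)

/-- `C` is connected in `G`: every pair of vertices of `C` is joined by a walk
all of whose vertices lie in `C`. -/
def Conn (G : SimpleGraph V) (C : Finset V) : Prop :=
  ∀ v ∈ C, ∀ w ∈ C, ∃ W : G.Walk v w, ∀ x ∈ W.support, x ∈ C

/-- The connected set Markov property for the bi-directed graph `G`. -/
def CSMP (G : SimpleGraph V) [DecidableRel G.Adj] (p : (V → Bool) → ℝ) : Prop :=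
  ∀ C : Finset V, C.Nonempty → Conn G C → Indep p C (Finset.univ \ spo G C)

/-- `C` is an inclusion-maximal connected subset of `D` (a connected component of the
induced subgraph on `D`). -/
def IsMaxConnComp (G : SimpleGraph V) (D C : Finset V) : Prop :=
  C ⊆ D ∧ C.Nonempty ∧ Conn G C ∧
    ∀ C' : Finset V, C ⊆ C' → C' ⊆ D → Conn G C' → C' = C

/-- The Möbius parameter `q_A(p) = P(X_A = 0)`. -/
def qM (p : (V → Bool) → ℝ) (A : Finset V) : ℝ := Pr p A (fun _ => false)

open Classical in
/-- The orbit `S(i)` of the cell `i` under the group `S` acting by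
`σ(i) = (i_{σ(v)})_{v ∈ V}`. -/
noncomputable def orbitF (S : Subgroup (Equiv.Perm V)) (i : V → Bool) :
    Finset (V → Bool) :=
  Finset.univ.filter (fun j => ∃ σ ∈ S, (fun v => i (σ v)) = j)

/-- The group-averaged empirical distribution `p̂_S`. -/
noncomputable def phat (S : Subgroup (Equiv.Perm V)) (n : (V → Bool) → ℕ)
    (i : V → Bool) : ℝ :=
  ((orbitF S i).card : ℝ)⁻¹ *
    ∑ j ∈ orbitF S i, (n j : ℝ) / (∑ k : V → Bool, (n k : ℝ))


lemma mem_orbitF {S : Subgroup (Equiv.Perm V)} {i j : V → Bool} :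
    j ∈ orbitF S i ↔ ∃ σ ∈ S, (fun v => i (σ v)) = j := by
  simp [orbitF]

lemma self_mem_orbitF {S : Subgroup (Equiv.Perm V)} (i : V → Bool) :
    i ∈ orbitF S i :=
  mem_orbitF.mpr ⟨1, S.one_mem, rfl⟩

lemma orbitF_eq_of_mem {S : Subgroup (Equiv.Perm V)} {i j : V → Bool}
    (h : j ∈ orbitF S i) : orbitF S j = orbitF S i := by
  obtain ⟨σ, hσ, hji⟩ := mem_orbitF.mp h
  ext k
  simp only [mem_orbitF]
  constructor
  · rintro ⟨τ, hτ, rfl⟩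
    exact ⟨σ * τ, S.mul_mem hσ hτ, by funext v; simp [← hji, Equiv.Perm.mul_apply]⟩
  · rintro ⟨ρ, hρ, rfl⟩
    refine ⟨σ⁻¹ * ρ, S.mul_mem (S.inv_mem hσ) hρ, ?_⟩
    funext v
    simp [← hji, Equiv.Perm.mul_apply]

lemma mem_orbitF_symm {S : Subgroup (Equiv.Perm V)} {i j : V → Bool}
    (h : j ∈ orbitF S i) : i ∈ orbitF S j := by
  rw [orbitF_eq_of_mem h]; exact self_mem_orbitF i

lemma phat_eq_of_mem {S : Subgroup (Equiv.Perm V)} {n : (V → Bool) → ℕ}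
    {i j : V → Bool} (h : j ∈ orbitF S i) : phat S n j = phat S n i := by
  unfold phat
  rw [orbitF_eq_of_mem h]

/-- Group averaging of cell counts yields the MLE in the symmetry model `B(S)`. -/
theorem stmt11 (S : Subgroup (Equiv.Perm V)) (n : (V → Bool) → ℕ)
    (hn : 0 < ∑ i : V → Bool, n i) :
    IsDist (phat S n) ∧
    (∀ σ ∈ S, ∀ i : V → Bool, phat S n i = phat S n (fun v => i (σ v))) ∧
    (∀ p : (V → Bool) → ℝ, IsDist p →
      (∀ σ ∈ S, ∀ i : V → Bool, p i = p (fun v => i (σ v))) →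
      ∏ i : V → Bool, p i ^ n i ≤ ∏ i : V → Bool, phat S n i ^ n i) := by
  classical
  have hNRdef : ∑ k : V → Bool, (n k : ℝ) = ((∑ k : V → Bool, n k : ℕ) : ℝ) := by
    push_cast; rfl
  set NR : ℝ := ∑ k : V → Bool, (n k : ℝ)
  have hNR : 0 < NR := by rw [hNRdef]; exact_mod_cast hn
  have hcardpos : ∀ i : V → Bool, 0 < ((orbitF S i).card : ℝ) := by
    intro i
    exact_mod_cast card_pos.mpr ⟨i, self_mem_orbitF i⟩
  have swap : ∀ F : (V → Bool) → ℝ,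
      ∑ i : V → Bool, ∑ j ∈ orbitF S i, F j
        = ∑ j : V → Bool, ((orbitF S j).card : ℝ) * F j := by
    intro F
    calc ∑ i : V → Bool, ∑ j ∈ orbitF S i, F j
        = ∑ i : V → Bool, ∑ j : V → Bool, if j ∈ orbitF S i then F j else 0 := by
          refine sum_congr rfl fun i _ => ?_
          rw [Finset.sum_ite_mem, univ_inter]
      _ = ∑ j : V → Bool, ∑ i : V → Bool, if j ∈ orbitF S i then F j else 0 :=
          Finset.sum_comm
      _ = ∑ j : V → Bool, ∑ i : V → Bool, if i ∈ orbitF S j then F j else 0 := by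
          refine sum_congr rfl fun j _ => sum_congr rfl fun i _ => ?_
          exact if_congr ⟨fun h => mem_orbitF_symm h, fun h => mem_orbitF_symm h⟩ rfl rfl
      _ = ∑ j : V → Bool, ∑ i ∈ orbitF S j, F j := by
          refine sum_congr rfl fun j _ => ?_
          rw [Finset.sum_ite_mem, univ_inter]
      _ = ∑ j : V → Bool, ((orbitF S j).card : ℝ) * F j := by
          refine sum_congr rfl fun j _ => ?_
          rw [sum_const, nsmul_eq_mul]
  have hdist : IsDist (phat S n) := by
    constructor
    · intro i
      unfold phat
      refine mul_nonneg (inv_nonneg.mpr (Nat.cast_nonneg _)) (sum_nonneg fun j _ => ?_)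
      exact div_nonneg (Nat.cast_nonneg _) hNR.le
    · calc ∑ i : V → Bool, phat S n i
          = ∑ i : V → Bool, ∑ j ∈ orbitF S i,
              ((orbitF S j).card : ℝ)⁻¹ * ((n j : ℝ) / NR) := by
            refine sum_congr rfl fun i _ => ?_
            unfold phat
            rw [mul_sum]
            exact sum_congr rfl fun j hj => by rw [orbitF_eq_of_mem hj]
        _ = ∑ j : V → Bool,
              ((orbitF S j).card : ℝ) * (((orbitF S j).card : ℝ)⁻¹ * ((n j : ℝ) / NR)) :=
            swap _
        _ = ∑ j : V → Bool, (n j : ℝ) / NR := by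
            refine sum_congr rfl fun j _ => ?_
            rw [← mul_assoc, mul_inv_cancel₀ (hcardpos j).ne', one_mul]
        _ = 1 := by rw [← sum_div, div_self hNR.ne']
  have hinv : ∀ σ ∈ S, ∀ i : V → Bool, phat S n i = phat S n (fun v => i (σ v)) := by
    intro σ hσ i
    exact (phat_eq_of_mem (mem_orbitF.mpr ⟨σ, hσ, rfl⟩)).symm
  refine ⟨hdist, hinv, ?_⟩
  intro p hp hpinv
  set Norb : Finset (Finset (V → Bool)) := univ.image (orbitF S) with hNorb
  have hmemN : ∀ O ∈ Norb, ∃ i₀ : V → Bool, orbitF S i₀ = O := by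
    intro O hO
    rw [hNorb, mem_image] at hO
    obtain ⟨i₀, -, h⟩ := hO
    exact ⟨i₀, h⟩
  have hdisj : (↑Norb : Set (Finset (V → Bool))).PairwiseDisjoint id := by
    intro O₁ h1 O₂ h2 hne
    obtain ⟨i, rfl⟩ := hmemN O₁ (mem_coe.mp h1)
    obtain ⟨j, rfl⟩ := hmemN O₂ (mem_coe.mp h2)
    simp only [Function.onFun, id_eq]
    rw [Finset.disjoint_left]
    intro k hk1 hk2
    exact hne (by rw [← orbitF_eq_of_mem hk1, ← orbitF_eq_of_mem hk2])
  have hcover : Norb.biUnion id = univ := by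
    refine Finset.eq_univ_of_forall fun i => ?_
    rw [mem_biUnion]
    exact ⟨orbitF S i, mem_image_of_mem _ (mem_univ i), self_mem_orbitF i⟩
  have hsum_dec : ∀ f : (V → Bool) → ℝ,
      ∑ i : V → Bool, f i = ∑ O ∈ Norb, ∑ i ∈ O, f i := by
    intro f
    rw [← hcover, sum_biUnion hdisj]
    simp [id_eq]
  have hprod_dec : ∀ f : (V → Bool) → ℝ,
      ∏ i : V → Bool, f i = ∏ O ∈ Norb, ∏ i ∈ O, f i := by
    intro f
    rw [← hcover, prod_biUnion hdisj]
    simp [id_eq]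
  set M : Finset (V → Bool) → ℕ := fun O => ∑ i ∈ O, n i with hM
  set x : Finset (V → Bool) → ℝ := fun O => ∑ i ∈ O, p i with hx
  have hxnn : ∀ O ∈ Norb, 0 ≤ x O := fun O _ => sum_nonneg fun i _ => hp.1 i
  have hx1 : ∑ O ∈ Norb, x O = 1 := (hsum_dec p).symm.trans hp.2
  have hMN : ∑ O ∈ Norb, M O = ∑ i : V → Bool, n i := by
    rw [hM]
    conv_rhs => rw [← hcover]
    rw [sum_biUnion hdisj]
    simp [id_eq]
  have horb : ∀ O ∈ Norb,
      (∏ i ∈ O, p i ^ n i = (x O / (O.card : ℝ)) ^ M O) ∧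
      (∏ i ∈ O, phat S n i ^ n i = (((M O : ℝ) / NR) / (O.card : ℝ)) ^ M O) := by
    intro O hO
    obtain ⟨i₀, rfl⟩ := hmemN O hO
    have hd := hcardpos i₀
    have hpc : ∀ i ∈ orbitF S i₀, p i = p i₀ := by
      intro i hi
      obtain ⟨σ, hσ, hact⟩ := mem_orbitF.mp hi
      rw [← hact]
      exact (hpinv σ hσ i₀).symm
    have hxO : x (orbitF S i₀) = ((orbitF S i₀).card : ℝ) * p i₀ := by
      rw [hx]
      simp only
      rw [sum_congr rfl hpc, sum_const, nsmul_eq_mul]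
    constructor
    · calc ∏ i ∈ orbitF S i₀, p i ^ n i
          = ∏ i ∈ orbitF S i₀, p i₀ ^ n i :=
            prod_congr rfl fun i hi => by rw [hpc i hi]
        _ = p i₀ ^ M (orbitF S i₀) := prod_pow_eq_pow_sum _ _ _
        _ = (x (orbitF S i₀) / ((orbitF S i₀).card : ℝ)) ^ M (orbitF S i₀) := by
            rw [hxO, mul_div_cancel_left₀ _ hd.ne']
    · have hph : ∀ i ∈ orbitF S i₀,
          phat S n i = ((M (orbitF S i₀) : ℝ) / NR) / ((orbitF S i₀).card : ℝ) := by
        intro i hi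
        rw [phat_eq_of_mem hi]
        unfold phat
        rw [inv_mul_eq_div]
        congr 1
        rw [← sum_div]
        congr 1
        rw [hM]
        push_cast
        rfl
      calc ∏ i ∈ orbitF S i₀, phat S n i ^ n i
          = ∏ i ∈ orbitF S i₀,
              (((M (orbitF S i₀) : ℝ) / NR) / ((orbitF S i₀).card : ℝ)) ^ n i :=
            prod_congr rfl fun i hi => by rw [hph i hi]
        _ = (((M (orbitF S i₀) : ℝ) / NR) / ((orbitF S i₀).card : ℝ)) ^ M (orbitF S i₀) :=
            prod_pow_eq_pow_sum _ _ _
  have hdpos : 0 < ∏ O ∈ Norb, ((O.card : ℝ)) ^ M O := by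
    refine prod_pos fun O hO => ?_
    obtain ⟨i₀, rfl⟩ := hmemN O hO
    exact pow_pos (hcardpos i₀) _
  have hgibbs : ∏ O ∈ Norb, x O ^ M O ≤ ∏ O ∈ Norb, ((M O : ℝ) / NR) ^ M O := by
    rw [hNRdef]
    exact gibbsAux Norb x M (∑ i : V → Bool, n i) hxnn hx1.le hn hMN
  calc ∏ i : V → Bool, p i ^ n i
      = ∏ O ∈ Norb, ∏ i ∈ O, p i ^ n i := hprod_dec _
    _ = ∏ O ∈ Norb, (x O / (O.card : ℝ)) ^ M O :=
        prod_congr rfl fun O hO => (horb O hO).1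
    _ = (∏ O ∈ Norb, x O ^ M O) / ∏ O ∈ Norb, ((O.card : ℝ)) ^ M O := by
        rw [← prod_div_distrib]
        exact prod_congr rfl fun O _ => div_pow _ _ _
    _ ≤ (∏ O ∈ Norb, ((M O : ℝ) / NR) ^ M O) / ∏ O ∈ Norb, ((O.card : ℝ)) ^ M O :=
        (div_le_div_iff_of_pos_right hdpos).mpr hgibbs
    _ = ∏ O ∈ Norb, (((M O : ℝ) / NR) / (O.card : ℝ)) ^ M O := by
        rw [← prod_div_distrib]
        exact prod_congr rfl fun O _ => (div_pow _ _ _).symm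
    _ = ∏ O ∈ Norb, ∏ i ∈ O, phat S n i ^ n i :=
        prod_congr rfl fun O hO => ((horb O hO).2).symm
    _ = ∏ i : V → Bool, phat S n i ^ n i := (hprod_dec _).symm


end BMMI
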